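/- Conjugation of a block tridiagonal matrix by the red/black block permutation yields a 2×2 block structure in which the (1,1) block is block diagonal: if A is block tridiagonal with n = 2m block rows and P is the permutation matrix of the red/black block reordering, then in P A P^T the submatrix indexed by the first m block rows and first m block columns is block diagonal with blocks D_0, D_2, ..., D_{2m-2}. -/

import Mathlib

open Matrix

/-- Conjugating a block tridiagonal matrix by the red/black block permutation
yields a 2×2 block structure in which the (1,1) block (first `m` block rows
and columns) is block diagonal with blocks `D_0, D_2, …, D_{2m-2}`. -/
theorem red_black_conjugation_top_left_block_diagonal
    (m s : ℕ) (D E F : ℕ → Matrix (Fin s) (Fin s) ℝ)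
    (A : Matrix (Fin (2 * m) × Fin s) (Fin (2 * m) × Fin s) ℝ)
    (hA : A = fun p q =>
      if p.1 = q.1 then D (p.1 : ℕ) p.2 q.2
      else if (p.1 : ℕ) = (q.1 : ℕ) + 1 then E (p.1 : ℕ) p.2 q.2
      else if (q.1 : ℕ) = (p.1 : ℕ) + 1 then F (p.1 : ℕ) p.2 q.2 else 0)
    (σ : Fin (2 * m) → Fin (2 * m))
    (hσ : ∀ i, (σ i : ℕ) =
      if (i : ℕ) % 2 = 0 then (i : ℕ) / 2 else m + ((i : ℕ) - 1) / 2)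
    (P : Matrix (Fin (2 * m) × Fin s) (Fin (2 * m) × Fin s) ℝ)
    (hP : P = fun p q => if p.1 = σ q.1 ∧ p.2 = q.2 then 1 else 0) :
    ∀ (i j : Fin (2 * m)), (i : ℕ) < m → (j : ℕ) < m → ∀ (a b : Fin s),
      (P * A * Pᵀ) (i, a) (j, b) = if i = j then D (2 * (i : ℕ)) a b else 0 := by
  intro i j hi hj a b
  simp only [mul_apply, transpose_apply]
  subst hA hP
  have h2m : 2 * (i : ℕ) < 2 * m := by omega
  have h2n : 2 * (j : ℕ) < 2 * m := by omega
  set u : Fin (2 * m) := ⟨2 * i, h2m⟩ with hu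
  set v : Fin (2 * m) := ⟨2 * j, h2n⟩ with hv
  have hσeq : ∀ (w : Fin (2 * m)) (k : Fin (2 * m)), (k : ℕ) < m →
      (k = σ w ↔ (w : ℕ) = 2 * (k : ℕ)) := by
    intro w k hk
    rw [Fin.ext_iff, hσ w]
    split_ifs with h <;> omega
  beta_reduce
  rw [Finset.sum_eq_single ((v, b) : Fin (2 * m) × Fin s)]
  · rw [Finset.sum_eq_single ((u, a) : Fin (2 * m) × Fin s)]
    · have h1 : i = σ u := by rw [hσeq u i hi]
      have h2 : j = σ v := by rw [hσeq v j hj]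
      rw [if_pos (show i = σ (u, a).1 ∧ a = (u, a).2 from ⟨h1, rfl⟩),
        if_pos (show j = σ (v, b).1 ∧ b = (v, b).2 from ⟨h2, rfl⟩), one_mul, mul_one]
      by_cases hij : i = j
      · subst hij
        rw [if_pos (show (u, a).1 = (v, b).1 from rfl), if_pos rfl]
      · have huv : (u, a).1 ≠ (v, b).1 := fun h => hij (Fin.ext (by
          have := Fin.ext_iff.mp h
          simp only [hu, hv] at this
          omega))
        have hij' : (i : ℕ) ≠ (j : ℕ) := fun h => hij (Fin.ext h)
        rw [if_neg huv, if_neg hij,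
          if_neg (show ¬ (((u, a).1 : ℕ) = ((v, b).1 : ℕ) + 1) from
            show ¬ (2 * (i : ℕ) = 2 * (j : ℕ) + 1) by omega),
          if_neg (show ¬ (((v, b).1 : ℕ) = ((u, a).1 : ℕ) + 1) from
            show ¬ (2 * (j : ℕ) = 2 * (i : ℕ) + 1) by omega)]
    · intro c _ hc
      have : ¬ (i = σ c.1 ∧ a = c.2) := by
        rintro ⟨h1, h2⟩
        apply hc
        have := (hσeq c.1 i hi).mp h1
        exact Prod.ext (Fin.ext (by simp only [hu]; omega)) h2.symm
      rw [if_neg this, zero_mul]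
    · intro h
      exact absurd (Finset.mem_univ _) h
  · intro c _ hc
    have : ¬ (j = σ c.1 ∧ b = c.2) := by
      rintro ⟨h1, h2⟩
      apply hc
      have := (hσeq c.1 j hj).mp h1
      exact Prod.ext (Fin.ext (by simp only [hv]; omega)) h2.symm
    rw [if_neg this, mul_zero]
  · intro h
    exact absurd (Finset.mem_univ _) h
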